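/- arXiv:2301.12187 — 2 statements merged into one kernel-verified Lean document; each statement's English description precedes it below -/
import Mathlib

section
/- For all natural numbers k < l, the optimal per-segment latency satisfies the Bellman equation T_opt(k, l) = min over m ∈ {k, k+1, …, l−1} of (T_opt(k, m) + T(m, l)). -/
noncomputable section
open scoped List

/-- Chain sum of `f` over the consecutive pairs of the elements of `P` in increasing order. -/
def chainSum (f : ℕ → ℕ → ℝ) (P : Finset ℕ) : ℝ :=
  (List.zipWith f (P.sort (· ≤ ·)) (P.sort (· ≤ ·)).tail).sum

lemma sort_insert_max (P : Finset ℕ) (l : ℕ) (h : ∀ p ∈ P, p < l) :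
    (insert l P).sort (· ≤ ·) = P.sort (· ≤ ·) ++ [l] := by
  have hnl : l ∉ P := fun hl => lt_irrefl l (h l hl)
  have hperm : (insert l P).sort (· ≤ ·) ~ P.sort (· ≤ ·) ++ [l] :=
    calc (insert l P).sort (· ≤ ·) ~ (insert l P).toList := Finset.sort_perm_toList _ _
      _ ~ l :: P.toList := Finset.toList_insert hnl
      _ ~ l :: P.sort (· ≤ ·) := ((Finset.sort_perm_toList _ _).symm.cons l)
      _ ~ P.sort (· ≤ ·) ++ [l] := by
          simpa using (List.perm_append_comm (l₁ := [l]) (l₂ := P.sort (· ≤ ·)))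
  have hsorted : (P.sort (· ≤ ·) ++ [l]).Pairwise (· ≤ ·) := by
    rw [List.pairwise_append]
    refine ⟨Finset.pairwise_sort _ _, List.pairwise_singleton _ _, ?_⟩
    intro x hx y hy
    simp only [List.mem_singleton] at hy
    subst hy
    exact (h x ((Finset.mem_sort _).1 hx)).le
  exact List.Perm.eq_of_pairwise' (Finset.pairwise_sort _ _) hsorted hperm

lemma chainList_append (f : ℕ → ℕ → ℝ) (x : ℕ) :
    ∀ (L : List ℕ) (hL : L ≠ []),
      (List.zipWith f (L ++ [x]) (L ++ [x]).tail).sum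
        = (List.zipWith f L L.tail).sum + f (L.getLast hL) x
  | [], h => absurd rfl h
  | [a], _ => by simp
  | a :: b :: t, _ => by
    have ih := chainList_append f x (b :: t) (by simp)
    simp only [List.cons_append, List.tail_cons, List.zipWith_cons_cons, List.sum_cons] at *
    rw [List.getLast_cons (by simp : (b :: t) ≠ []), ih]
    ring

lemma chainSum_insert_max (f : ℕ → ℕ → ℝ) (P : Finset ℕ) (hP : P.Nonempty) (l : ℕ)
    (h : ∀ p ∈ P, p < l) :
    chainSum f (insert l P) = chainSum f P + f (P.max' hP) l := by
  have hs := sort_insert_max P l h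
  have hne : P.sort (· ≤ ·) ≠ [] := by
    intro hc
    have hl := Finset.length_sort (s := P) (· ≤ ·)
    rw [hc] at hl
    exact hP.ne_empty (Finset.card_eq_zero.mp hl.symm)
  rw [chainSum, hs, chainList_append f l _ hne, chainSum]
  congr 1
  rw [Finset.max'_eq_sorted_last, List.getLast_eq_getElem]


/-- Optimal latency `T_opt(k,l)`: the minimum of `chainSum T ({k} ∪ S ∪ {l})`
over all finite sets `S ⊆ {k+1,…,l−1}`. -/
def Topt (T : ℕ → ℕ → ℝ) (k l : ℕ) : ℝ :=
  ((Finset.Ioo k l).powerset.image (fun S => chainSum T ({k} ∪ S ∪ {l}))).min'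
    ((Finset.powerset_nonempty _).image _)


lemma chainSum_singleton (f : ℕ → ℕ → ℝ) (k : ℕ) : chainSum f {k} = 0 := by
  simp [chainSum]

lemma Topt_le (T : ℕ → ℕ → ℝ) {k l : ℕ} {S : Finset ℕ} (hS : S ⊆ Finset.Ioo k l) :
    Topt T k l ≤ chainSum T ({k} ∪ S ∪ {l}) := by
  apply Finset.min'_le
  exact Finset.mem_image_of_mem _ (Finset.mem_powerset.mpr hS)

lemma exists_Topt (T : ℕ → ℕ → ℝ) (k l : ℕ) :
    ∃ S ⊆ Finset.Ioo k l, Topt T k l = chainSum T ({k} ∪ S ∪ {l}) := by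
  have := Finset.min'_mem _ (((Finset.powerset_nonempty (Finset.Ioo k l))).image
    (fun S => chainSum T ({k} ∪ S ∪ {l})))
  rw [Finset.mem_image] at this
  obtain ⟨S, hS, hSe⟩ := this
  exact ⟨S, Finset.mem_powerset.mp hS, hSe.symm⟩

lemma Topt_self (T : ℕ → ℕ → ℝ) (k : ℕ) : Topt T k k = 0 := by
  simp [Topt, chainSum]

lemma chainSum_union_singleton (T : ℕ → ℕ → ℝ) {Q : Finset ℕ} (hQ : Q.Nonempty) {l : ℕ}
    (h : ∀ p ∈ Q, p < l) :
    chainSum T (Q ∪ {l}) = chainSum T Q + T (Q.max' hQ) l := by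
  have he : Q ∪ {l} = insert l Q := by rw [Finset.union_comm, ← Finset.insert_eq]
  rw [he, chainSum_insert_max T Q hQ l h]

/-- Bellman equation for the optimal per-segment latency. -/
theorem Topt_bellman (T : ℕ → ℕ → ℝ) (k l : ℕ) (hkl : k < l) :
    Topt T k l =
      ((Finset.Ico k l).image (fun m => Topt T k m + T m l)).min'
        ((Finset.nonempty_Ico.mpr hkl).image _) := by
  apply le_antisymm
  · -- ≤ : for each m ∈ Ico k l, Topt T k l ≤ Topt T k m + T m l
    apply Finset.le_min'
    intro y hy
    rw [Finset.mem_image] at hy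
    obtain ⟨m, hm, rfl⟩ := hy
    rw [Finset.mem_Ico] at hm
    obtain ⟨S, hS, hSe⟩ := exists_Topt T k m
    rcases eq_or_lt_of_le hm.1 with heq | hlt
    · -- m = k
      subst heq
      have hSempty : S = ∅ := Finset.subset_empty.mp (by simpa using hS)
      subst hSempty
      have h1 : Topt T k l ≤ chainSum T ({k} ∪ ∅ ∪ {l}) :=
        Topt_le T (by simp)
      have h2 : chainSum T (({k} : Finset ℕ) ∪ ∅ ∪ {l})
          = chainSum T {k} + T (({k} : Finset ℕ).max' ⟨k, by simp⟩) l := by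
        rw [Finset.union_empty]
        exact chainSum_union_singleton T ⟨k, by simp⟩ (by simpa using hm.2)
      rw [h2, chainSum_singleton, Finset.max'_singleton] at h1
      rw [Topt_self]
      linarith
    · -- k < m
      set Q' : Finset ℕ := {k} ∪ S ∪ {m} with hQ'def
      have hQ'ne : Q'.Nonempty := ⟨k, by simp [hQ'def]⟩
      have hQ'lt : ∀ p ∈ Q', p < l := by
        intro p hp
        simp only [hQ'def, Finset.mem_union, Finset.mem_singleton] at hp
        rcases hp with (rfl | hp) | rfl
        · exact hm.2.trans' hlt |>.trans_le le_rfl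
        · exact lt_trans (Finset.mem_Ioo.mp (hS hp)).2 hm.2
        · exact hm.2
      have hmax : Q'.max' hQ'ne = m := by
        apply le_antisymm
        · apply Finset.max'_le
          intro y hy
          simp only [hQ'def, Finset.mem_union, Finset.mem_singleton] at hy
          rcases hy with (rfl | hy) | rfl
          · exact hlt.le
          · exact (Finset.mem_Ioo.mp (hS hy)).2.le
          · exact le_rfl
        · exact Q'.le_max' m (by simp [hQ'def])
      have hsub : insert m S ⊆ Finset.Ioo k l := by
        intro x hx
        rw [Finset.mem_insert] at hx
        rcases hx with rfl | hx
        · exact Finset.mem_Ioo.mpr ⟨hlt, hm.2⟩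
        · have := Finset.mem_Ioo.mp (hS hx)
          exact Finset.mem_Ioo.mpr ⟨this.1, lt_trans this.2 hm.2⟩
      have hU : {k} ∪ insert m S ∪ {l} = Q' ∪ {l} := by
        simp only [hQ'def]
        ext x
        simp only [Finset.mem_union, Finset.mem_singleton, Finset.mem_insert]
        tauto
      have h1 : Topt T k l ≤ chainSum T ({k} ∪ insert m S ∪ {l}) := Topt_le T hsub
      rw [hU, chainSum_union_singleton T hQ'ne hQ'lt, hmax] at h1
      rw [hSe]
      exact h1
  · -- ≥ : Topt T k l is achieved by some S; decompose it
    obtain ⟨S, hS, hSe⟩ := exists_Topt T k l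
    set Q : Finset ℕ := {k} ∪ S with hQdef
    have hkQ : k ∈ Q := by simp [hQdef]
    have hQne : Q.Nonempty := ⟨k, hkQ⟩
    set m : ℕ := Q.max' hQne with hmdef
    have hmem : m ∈ Q := Q.max'_mem hQne
    have hQlt : ∀ p ∈ Q, p < l := by
      intro p hp
      rw [hQdef, Finset.mem_union, Finset.mem_singleton] at hp
      rcases hp with rfl | hp
      · exact hkl
      · exact (Finset.mem_Ioo.mp (hS hp)).2
    have hkm : k ≤ m := Q.le_max' k hkQ
    have hml : m < l := hQlt m hmem
    have hsplit : chainSum T ({k} ∪ S ∪ {l}) = chainSum T Q + T m l :=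
      chainSum_union_singleton T hQne hQlt
    have hTQ : Topt T k m ≤ chainSum T Q := by
      rcases eq_or_lt_of_le hkm with heq | hlt
      · -- m = k, so S = ∅ and Q = {k}
        have hSempty : S = ∅ := by
          rw [Finset.eq_empty_iff_forall_notMem]
          intro x hx
          have h1 : k < x := (Finset.mem_Ioo.mp (hS hx)).1
          have h2 : x ≤ m := Q.le_max' x (by simp [hQdef, hx])
          omega
        have : Q = {k} := by simp [hQdef, hSempty]
        rw [this, chainSum_singleton, ← heq, Topt_self]
      · -- k < m : m ∈ S, peel it off
        have hmS : m ∈ S := by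
          rw [hQdef, Finset.mem_union, Finset.mem_singleton] at hmem
          rcases hmem with h | h
          · omega
          · exact h
        have hS' : S.erase m ⊆ Finset.Ioo k m := by
          intro x hx
          rw [Finset.mem_erase] at hx
          have h1 := Finset.mem_Ioo.mp (hS hx.2)
          have h2 : x ≤ m := Q.le_max' x (by simp [hQdef, hx.2])
          rw [Finset.mem_Ioo]
          exact ⟨h1.1, lt_of_le_of_ne h2 hx.1⟩
        have hQeq : {k} ∪ S.erase m ∪ {m} = Q := by
          rw [hQdef]
          ext x
          simp only [Finset.mem_union, Finset.mem_singleton, Finset.mem_erase]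
          constructor
          · rintro ((rfl | ⟨_, hx⟩) | rfl) <;> tauto
          · rintro (rfl | hx)
            · tauto
            · by_cases hxm : x = m <;> tauto
        calc Topt T k m ≤ chainSum T ({k} ∪ S.erase m ∪ {m}) := Topt_le T hS'
          _ = chainSum T Q := by rw [hQeq]
    have hmin : ((Finset.Ico k l).image (fun m => Topt T k m + T m l)).min'
        ((Finset.nonempty_Ico.mpr hkl).image _) ≤ Topt T k m + T m l := by
      apply Finset.min'_le
      exact Finset.mem_image_of_mem _ (Finset.mem_Ico.mpr ⟨hkm, hml⟩)
    rw [hSe, hsplit]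
    linarith
end
end

section
/- Let 0 < k < l be natural numbers and let A be a nonempty finite subset of {1, …, l−1} whose maximum element is k. Then the minimum over all finite sets S with A ⊆ S ⊆ {1, …, l−1} of chainSum T ({0} ∪ S ∪ {l}) equals (the minimum over all finite sets S' with A \ {k} ⊆ S' ⊆ {1, …, k−1} of chainSum T ({0} ∪ S' ∪ {k})) + T_opt(k, l). -/
noncomputable section

def chainL (f : ℕ → ℕ → ℝ) : List ℕ → ℝ
  | [] => 0
  | [_] => 0
  | a :: b :: t => f a b + chainL f (b :: t)

lemma chainL_eq (f : ℕ → ℕ → ℝ) : ∀ L : List ℕ, chainL f L = (List.zipWith f L L.tail).sum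
  | [] => by simp [chainL]
  | [a] => by simp [chainL]
  | a :: b :: t => by
    rw [chainL, chainL_eq f (b :: t)]
    simp

lemma chainL_append (f : ℕ → ℕ → ℝ) (a : ℕ) : ∀ l1 l2 : List ℕ,
    chainL f (l1 ++ a :: l2) = chainL f (l1 ++ [a]) + chainL f (a :: l2)
  | [], l2 => by simp [chainL]
  | [b], l2 => by simp [chainL]
  | b :: c :: t, l2 => by
    have := chainL_append f a (c :: t) l2
    simp only [List.cons_append, chainL, List.append_eq] at *
    rw [this]; ring

lemma sort_union (P Q : Finset ℕ) (h : ∀ p ∈ P, ∀ q ∈ Q, p ≤ q) (hd : Disjoint P Q) :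
    (P ∪ Q).sort (· ≤ ·) = P.sort (· ≤ ·) ++ Q.sort (· ≤ ·) := by
  refine (fun hp h1 h2 => List.Perm.eq_of_pairwise' (r := (· ≤ ·)) h1 h2 hp) ?_ ?_ ?_
  · rw [← Multiset.coe_eq_coe, ← Multiset.coe_add] at *
    simp only [Finset.sort_eq]
    rw [← Finset.disjUnion_eq_union P Q hd]
    rfl
  · exact Finset.pairwise_sort _ _
  · rw [List.pairwise_append]
    refine ⟨Finset.pairwise_sort _ _, Finset.pairwise_sort _ _, ?_⟩
    intro x hx y hy
    exact h x ((Finset.mem_sort _).mp hx) y ((Finset.mem_sort _).mp hy)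

lemma chainSum_split (f : ℕ → ℕ → ℝ) (k : ℕ) (P Q : Finset ℕ)
    (hP : ∀ p ∈ P, p ≤ k) (hQ : ∀ q ∈ Q, k ≤ q) (hkP : k ∈ P) (hkQ : k ∈ Q) :
    chainSum f (P ∪ Q) = chainSum f P + chainSum f Q := by
  have hPQ : P ∪ Q = P ∪ Q.erase k := by
    ext x
    simp only [Finset.mem_union, Finset.mem_erase]
    constructor
    · rintro (h | h)
      · exact Or.inl h
      · rcases eq_or_ne x k with rfl | hne
        · exact Or.inl hkP
        · exact Or.inr ⟨hne, h⟩
    · rintro (h | ⟨_, h⟩) <;> [exact Or.inl h; exact Or.inr h]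
  have hQerase : ∀ q ∈ Q.erase k, k < q := by
    intro q hq
    rcases Finset.mem_erase.mp hq with ⟨hne, hq⟩
    exact lt_of_le_of_ne (hQ q hq) (Ne.symm hne)
  have hd1 : Disjoint P (Q.erase k) := by
    rw [Finset.disjoint_left]
    intro x hxP hxQ
    exact absurd (hP x hxP) (not_le.mpr (hQerase x hxQ))
  have hsort1 : (P ∪ Q).sort (· ≤ ·) = P.sort (· ≤ ·) ++ (Q.erase k).sort (· ≤ ·) := by
    rw [hPQ]
    exact sort_union _ _ (fun p hp q hq => (hP p hp).trans (hQerase q hq).le) hd1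
  have hsortP : P.sort (· ≤ ·) = (P.erase k).sort (· ≤ ·) ++ [k] := by
    have : P = P.erase k ∪ {k} := by
      ext x
      simp only [Finset.mem_union, Finset.mem_erase, Finset.mem_singleton]
      constructor
      · intro h; rcases eq_or_ne x k with rfl | hne
        · exact Or.inr rfl
        · exact Or.inl ⟨hne, h⟩
      · rintro (⟨_, h⟩ | rfl) <;> [exact h; exact hkP]
    conv_lhs => rw [this]
    rw [sort_union, Finset.sort_singleton]
    · intro p hp q hq
      rw [Finset.mem_singleton] at hq; subst hq
      exact hP p (Finset.mem_erase.mp hp).2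
    · simp [Finset.disjoint_left]; tauto
  have hsortQ : Q.sort (· ≤ ·) = k :: (Q.erase k).sort (· ≤ ·) := by
    have : Q = {k} ∪ Q.erase k := by
      ext x
      simp only [Finset.mem_union, Finset.mem_erase, Finset.mem_singleton]
      constructor
      · intro h; rcases eq_or_ne x k with rfl | hne
        · exact Or.inl rfl
        · exact Or.inr ⟨hne, h⟩
      · rintro (rfl | ⟨_, h⟩) <;> [exact hkQ; exact h]
    conv_lhs => rw [this]
    rw [sort_union, Finset.sort_singleton]
    · rfl
    · intro p hp q hq
      rw [Finset.mem_singleton] at hp; subst hp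
      exact (hQerase q hq).le
    · simp [Finset.disjoint_right]
  have key : chainSum f (P ∪ Q) = chainL f ((P.erase k).sort (· ≤ ·) ++ k :: (Q.erase k).sort (· ≤ ·)) := by
    rw [chainSum, ← chainL_eq, hsort1, hsortP]
    simp
  rw [key, chainL_append, chainSum, chainSum, ← chainL_eq, ← chainL_eq, hsortP, hsortQ]

set_option maxHeartbeats 2000000 in
/-- Decomposition of the optimal latency over merge patterns containing `A`, splitting
at the maximum element `k` of `A`. -/
theorem min_latency_split (T : ℕ → ℕ → ℝ) (k l : ℕ) (hk : 0 < k) (hkl : k < l)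
    (A : Finset ℕ) (hA : A ⊆ Finset.Ioo 0 l) (hAne : A.Nonempty)
    (hmax : A.max' hAne = k) :
    ∃ x y : ℝ,
      IsLeast {z : ℝ | ∃ S : Finset ℕ, A ⊆ S ∧ S ⊆ Finset.Ioo 0 l ∧
        z = chainSum T ({0} ∪ S ∪ {l})} x ∧
      IsLeast {z : ℝ | ∃ S' : Finset ℕ, A \ {k} ⊆ S' ∧ S' ⊆ Finset.Ioo 0 k ∧
        z = chainSum T ({0} ∪ S' ∪ {k})} y ∧
      x = y + Topt T k l := by
  have hkA : k ∈ A := hmax ▸ A.max'_mem hAne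
  have hle : ∀ a ∈ A, a ≤ k := fun a ha => hmax ▸ A.le_max' a ha
  have hApos : ∀ a ∈ A, 0 < a ∧ a < l := fun a ha => Finset.mem_Ioo.mp (hA ha)
  set g1 : Finset ℕ → ℝ := fun S => chainSum T ({0} ∪ S ∪ {l}) with hg1
  set g2 : Finset ℕ → ℝ := fun S => chainSum T ({0} ∪ S ∪ {k}) with hg2
  set F1 := (Finset.Ioo 0 l).powerset.filter (fun S => A ⊆ S) with hF1def
  set F2 := (Finset.Ioo 0 k).powerset.filter (fun S => A \ {k} ⊆ S) with hF2def
  have hmemF1 : ∀ S, S ∈ F1 ↔ A ⊆ S ∧ S ⊆ Finset.Ioo 0 l := by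
    intro S
    simp [hF1def, Finset.mem_filter, Finset.mem_powerset, and_comm]
  have hmemF2 : ∀ S, S ∈ F2 ↔ A \ {k} ⊆ S ∧ S ⊆ Finset.Ioo 0 k := by
    intro S
    simp [hF2def, Finset.mem_filter, Finset.mem_powerset, and_comm]
  have hF1ne : (F1.image g1).Nonempty :=
    ⟨g1 A, Finset.mem_image_of_mem _ ((hmemF1 A).mpr ⟨subset_rfl, hA⟩)⟩
  have hAk : A \ {k} ⊆ Finset.Ioo 0 k := by
    intro a ha
    rcases Finset.mem_sdiff.mp ha with ⟨haA, hak⟩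
    rw [Finset.mem_singleton] at hak
    exact Finset.mem_Ioo.mpr ⟨(hApos a haA).1, lt_of_le_of_ne (hle a haA) hak⟩
  have hF2ne : (F2.image g2).Nonempty :=
    ⟨g2 (A \ {k}), Finset.mem_image_of_mem _ ((hmemF2 _).mpr ⟨subset_rfl, hAk⟩)⟩
  set x := (F1.image g1).min' hF1ne with hxdef
  set y := (F2.image g2).min' hF2ne with hydef
  have hTopt1 : ∃ S₀ ⊆ Finset.Ioo k l, Topt T k l = chainSum T ({k} ∪ S₀ ∪ {l}) := by
    have := Finset.min'_mem ((Finset.Ioo k l).powerset.image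
      (fun S => chainSum T ({k} ∪ S ∪ {l}))) ((Finset.powerset_nonempty _).image _)
    rw [Finset.mem_image] at this
    obtain ⟨S₀, hS₀, hval⟩ := this
    exact ⟨S₀, Finset.mem_powerset.mp hS₀, by rw [Topt, ← hval]⟩
  have hTopt2 : ∀ S ⊆ Finset.Ioo k l, Topt T k l ≤ chainSum T ({k} ∪ S ∪ {l}) :=
    fun S hS => Finset.min'_le _ _ (Finset.mem_image_of_mem _ (Finset.mem_powerset.mpr hS))
  refine ⟨x, y, ?_, ?_, ?_⟩
  · constructor
    · have := Finset.min'_mem _ hF1ne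
      rw [Finset.mem_image] at this
      obtain ⟨S, hS, hval⟩ := this
      rcases (hmemF1 S).mp hS with ⟨h1, h2⟩
      exact ⟨S, h1, h2, hval.symm⟩
    · rintro z ⟨S, h1, h2, rfl⟩
      exact Finset.min'_le _ _ (Finset.mem_image_of_mem _ ((hmemF1 S).mpr ⟨h1, h2⟩))
  · constructor
    · have := Finset.min'_mem _ hF2ne
      rw [Finset.mem_image] at this
      obtain ⟨S, hS, hval⟩ := this
      rcases (hmemF2 S).mp hS with ⟨h1, h2⟩
      exact ⟨S, h1, h2, hval.symm⟩
    · rintro z ⟨S, h1, h2, rfl⟩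
      exact Finset.min'_le _ _ (Finset.mem_image_of_mem _ ((hmemF2 S).mpr ⟨h1, h2⟩))
  · apply le_antisymm
    · -- x ≤ y + Topt
      have hy := Finset.min'_mem _ hF2ne
      rw [Finset.mem_image] at hy
      obtain ⟨S', hS'F2, hS'val⟩ := hy
      rcases (hmemF2 S').mp hS'F2 with ⟨hAS', hS'sub⟩
      obtain ⟨S₀, hS₀sub, hS₀val⟩ := hTopt1
      have hsplit : chainSum T (({0} ∪ S' ∪ {k}) ∪ ({k} ∪ S₀ ∪ {l})) =
          chainSum T ({0} ∪ S' ∪ {k}) + chainSum T ({k} ∪ S₀ ∪ {l}) := by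
        apply chainSum_split T k
        · intro p hp
          simp only [Finset.mem_union, Finset.mem_singleton] at hp
          rcases hp with (rfl | hp) | h
          · exact Nat.zero_le _
          · exact (Finset.mem_Ioo.mp (hS'sub hp)).2.le
          · exact h.le
        · intro q hq
          simp only [Finset.mem_union, Finset.mem_singleton] at hq
          rcases hq with (h | hq) | rfl
          · exact h.ge
          · exact (Finset.mem_Ioo.mp (hS₀sub hq)).1.le
          · exact hkl.le
        · simp
        · simp
      have hunion : ({0} ∪ S' ∪ {k}) ∪ ({k} ∪ S₀ ∪ {l}) = {0} ∪ (S' ∪ {k} ∪ S₀) ∪ {l} := by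
        ext a
        simp only [Finset.mem_union, Finset.mem_singleton]
        tauto
      have hScF1 : S' ∪ {k} ∪ S₀ ∈ F1 := by
        rw [hmemF1]
        constructor
        · intro a ha
          rcases eq_or_ne a k with rfl | hne
          · simp
          · have : a ∈ A \ {k} := Finset.mem_sdiff.mpr ⟨ha, by simpa using hne⟩
            simp only [Finset.mem_union]
            exact Or.inl (Or.inl (hAS' this))
        · intro a ha
          simp only [Finset.mem_union, Finset.mem_singleton] at ha
          rcases ha with (ha | rfl) | ha
          · have := Finset.mem_Ioo.mp (hS'sub ha)
            exact Finset.mem_Ioo.mpr ⟨this.1, this.2.trans hkl⟩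
          · exact Finset.mem_Ioo.mpr ⟨hk, hkl⟩
          · have := Finset.mem_Ioo.mp (hS₀sub ha)
            exact Finset.mem_Ioo.mpr ⟨hk.trans this.1, this.2⟩
      have hval : g1 (S' ∪ {k} ∪ S₀) = y + Topt T k l := by
        show chainSum T ({0} ∪ (S' ∪ {k} ∪ S₀) ∪ {l}) = y + Topt T k l
        rw [← hunion, hsplit, hS₀val]
        rw [show chainSum T ({0} ∪ S' ∪ {k}) = y from hS'val.trans hydef.symm]
      exact le_of_le_of_eq (Finset.min'_le _ _ (Finset.mem_image_of_mem _ hScF1)) hval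
    · -- y + Topt ≤ x
      have hx := Finset.min'_mem _ hF1ne
      rw [Finset.mem_image] at hx
      obtain ⟨S, hSF1, hSval⟩ := hx
      rcases (hmemF1 S).mp hSF1 with ⟨hAS, hSsub⟩
      have hkS : k ∈ S := hAS hkA
      have hdecomp : ({0} : Finset ℕ) ∪ S ∪ {l} =
          ({0} ∪ (S ∩ Finset.Ioo 0 k) ∪ {k}) ∪ ({k} ∪ (S ∩ Finset.Ioo k l) ∪ {l}) := by
        ext a
        simp only [Finset.mem_union, Finset.mem_singleton, Finset.mem_inter, Finset.mem_Ioo]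
        constructor
        · rintro ((rfl | ha) | rfl)
          · exact Or.inl (Or.inl (Or.inl rfl))
          · have h2 := Finset.mem_Ioo.mp (hSsub ha)
            rcases lt_trichotomy a k with h | rfl | h
            · exact Or.inl (Or.inl (Or.inr ⟨ha, h2.1, h⟩))
            · exact Or.inl (Or.inr rfl)
            · exact Or.inr (Or.inl (Or.inr ⟨ha, h, h2.2⟩))
          · exact Or.inr (Or.inr rfl)
        · rintro (((rfl | ⟨ha, _⟩) | rfl) | ((rfl | ⟨ha, _⟩) | rfl))
          · exact Or.inl (Or.inl rfl)
          · exact Or.inl (Or.inr ha)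
          · exact Or.inl (Or.inr hkS)
          · exact Or.inl (Or.inr hkS)
          · exact Or.inl (Or.inr ha)
          · exact Or.inr rfl
      have hsplit : chainSum T (({0} ∪ (S ∩ Finset.Ioo 0 k) ∪ {k}) ∪
          ({k} ∪ (S ∩ Finset.Ioo k l) ∪ {l})) =
          chainSum T ({0} ∪ (S ∩ Finset.Ioo 0 k) ∪ {k}) +
          chainSum T ({k} ∪ (S ∩ Finset.Ioo k l) ∪ {l}) := by
        apply chainSum_split T k
        · intro p hp
          simp only [Finset.mem_union, Finset.mem_singleton, Finset.mem_inter,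
            Finset.mem_Ioo] at hp
          rcases hp with (rfl | ⟨_, _, h⟩) | h
          · exact Nat.zero_le _
          · exact h.le
          · exact h.le
        · intro q hq
          simp only [Finset.mem_union, Finset.mem_singleton, Finset.mem_inter,
            Finset.mem_Ioo] at hq
          rcases hq with (h | ⟨_, h, _⟩) | rfl
          · exact h.ge
          · exact h.le
          · exact hkl.le
        · simp
        · simp
      have hyle : y ≤ chainSum T ({0} ∪ (S ∩ Finset.Ioo 0 k) ∪ {k}) := by
        apply Finset.min'_le
        apply Finset.mem_image_of_mem
        rw [hmemF2]
        refine ⟨?_, Finset.inter_subset_right⟩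
        intro a ha
        rcases Finset.mem_sdiff.mp ha with ⟨haA, hak⟩
        rw [Finset.mem_singleton] at hak
        exact Finset.mem_inter.mpr ⟨hAS haA,
          Finset.mem_Ioo.mpr ⟨(hApos a haA).1, lt_of_le_of_ne (hle a haA) hak⟩⟩
      have hTle : Topt T k l ≤ chainSum T ({k} ∪ (S ∩ Finset.Ioo k l) ∪ {l}) :=
        hTopt2 _ Finset.inter_subset_right
      calc y + Topt T k l ≤ chainSum T ({0} ∪ (S ∩ Finset.Ioo 0 k) ∪ {k}) +
            chainSum T ({k} ∪ (S ∩ Finset.Ioo k l) ∪ {l}) := add_le_add hyle hTle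
        _ = chainSum T ({0} ∪ S ∪ {l}) := by rw [← hsplit, ← hdecomp]
        _ = x := hSval
end
end
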